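/- Let G be a connected unit interval graph with a fixed unit interval representation with distinct endpoints, inducing a linear order < on vertices by left endpoints. If S is a power dominating set, F a propagating set of forces, and v_0 → v_1 → ⋯ → v_i a forcing chain with v_0 < v_1, then v_1 < v_2 < ⋯ < v_i; moreover, if i ≥ 2 and rd(v_i) = k, then rd(u) ≤ k−1 for every vertex u with v_0 ≤ u < v_i. -/
import Mathlib


open SimpleGraph Set

variable {V : Type*} {W : Type*}

/-- The closed neighborhood of a set `S`. -/
def closedNbhdSet (G : SimpleGraph V) (S : Set V) : Set V :=
  S ∪ {w | ∃ u ∈ S, G.Adj u w}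

/-- One round of the zero forcing propagation step. -/
def pdStep (G : SimpleGraph V) (A : Set V) : Set V :=
  A ∪ {w | ∃ u ∈ A, G.neighborSet u \ A = {w}}

/-- `obs G S k` is the set `P^[k](S)` of vertices observed after round `k`. -/
def obs (G : SimpleGraph V) (S : Set V) : ℕ → Set V
  | 0 => S
  | 1 => closedNbhdSet G S
  | (n + 2) => pdStep G (obs G S (n + 1))

/-- `S` is a power dominating set. -/
def IsPDS (G : SimpleGraph V) (S : Set V) : Prop :=
  ∃ t, obs G S t = Set.univ

/-- The power propagation time `pt_pd(G;S)`: least positive `t` with `P^[t](S) = V(G)`. -/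
noncomputable def ptpd (G : SimpleGraph V) (S : Set V) : ℕ :=
  sInf {t | 1 ≤ t ∧ obs G S t = Set.univ}

/-- `S` is a dominating set. -/
def IsDomSet (G : SimpleGraph V) (S : Set V) : Prop :=
  closedNbhdSet G S = Set.univ

/-- The domination number `γ(G)`. -/
noncomputable def gamma (G : SimpleGraph V) : ℕ :=
  sInf {k | ∃ S : Set V, IsDomSet G S ∧ S.ncard = k}

/-- The power domination number `γ_P(G)`. -/
noncomputable def gammaP (G : SimpleGraph V) : ℕ :=
  sInf {k | ∃ S : Set V, IsPDS G S ∧ S.ncard = k}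

/-- The product power throttling number `th_pd^×(G)`. -/
noncomputable def thpd (G : SimpleGraph V) : ℕ :=
  sInf {m | ∃ S : Set V, IsPDS G S ∧ m = S.ncard * ptpd G S}

/-- The power propagation time of `G`: minimum over minimum power dominating sets. -/
noncomputable def ptG (G : SimpleGraph V) : ℕ :=
  sInf {t | ∃ S : Set V, IsPDS G S ∧ S.ncard = gammaP G ∧ t = ptpd G S}

/-- `newObs G S k` is `P^(k)(S)`, the set of vertices first observed in round `k`. -/
def newObs (G : SimpleGraph V) (S : Set V) : ℕ → Set V
  | 0 => S
  | (k + 1) => obs G S (k + 1) \ obs G S k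

/-- `rd G S v` is the round in which `v` is first observed. -/
noncomputable def rd (G : SimpleGraph V) (S : Set V) (v : V) : ℕ :=
  sInf {k | v ∈ obs G S k}

/-- A (propagating) set of forces for a power dominating set `S`: each vertex `w ∉ S`
is forced by the vertex `f w`, legally with respect to the round function `rd`. -/
structure ForceSet (G : SimpleGraph V) (S : Set V) where
  f : V → V
  adj : ∀ w, w ∉ S → G.Adj (f w) w
  dom : ∀ w, w ∉ S → rd G S w = 1 → f w ∈ S
  zf : ∀ w, w ∉ S → 2 ≤ rd G S w →
    rd G S (f w) < rd G S w ∧ ∀ x, G.Adj (f w) x → x ≠ w → rd G S x < rd G S w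

lemma rd_le_of_mem (G : SimpleGraph V) (S : Set V) {v : V} {k : ℕ}
    (h : v ∈ obs G S k) : rd G S v ≤ k :=
  Nat.sInf_le h

lemma one_le_rd (G : SimpleGraph V) (S : Set V) (hS : IsPDS G S) {v : V}
    (hv : v ∉ S) : 1 ≤ rd G S v := by
  rcases Nat.eq_zero_or_pos (rd G S v) with h | h
  · exfalso
    rcases Nat.sInf_eq_zero.mp h with h0 | h0
    · exact hv h0
    · obtain ⟨t, ht⟩ := hS
      have hmem : t ∈ {k | v ∈ obs G S k} := by
        show v ∈ obs G S t
        rw [ht]; trivial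
      rw [h0] at hmem
      exact hmem
  · exact h

theorem stmt16 [Fintype V] (G : SimpleGraph V) (hG : G.Connected)
    (ℓ : V → ℝ) (hinj : Function.Injective ℓ)
    (hrep : ∀ u v, G.Adj u v ↔ u ≠ v ∧ |ℓ u - ℓ v| ≤ 1)
    (S : Set V) (hS : IsPDS G S) (F : ForceSet G S)
    (i : ℕ) (hi : 1 ≤ i) (c : ℕ → V)
    (hchain : ∀ j, j < i → c (j + 1) ∉ S ∧ F.f (c (j + 1)) = c j)
    (hlt : ℓ (c 0) < ℓ (c 1)) :
    (∀ j, 1 ≤ j → j < i → ℓ (c j) < ℓ (c (j + 1))) ∧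
      (2 ≤ i → ∀ u, ℓ (c 0) ≤ ℓ u → ℓ u < ℓ (c i) → rd G S u + 1 ≤ rd G S (c i)) := by
  classical
  have hnS : ∀ j, j < i → c (j + 1) ∉ S := fun j hj => (hchain j hj).1
  have hfc : ∀ j, j < i → F.f (c (j + 1)) = c j := fun j hj => (hchain j hj).2
  have hadj : ∀ j, j < i → G.Adj (c j) (c (j + 1)) := by
    intro j hj
    have h := F.adj (c (j + 1)) (hnS j hj)
    rwa [hfc j hj] at h
  have hrd1 : ∀ j, j < i → 1 ≤ rd G S (c (j + 1)) :=
    fun j hj => one_le_rd G S hS (hnS j hj)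
  have hrd2 : ∀ j, j < i → c j ∉ S → 2 ≤ rd G S (c (j + 1)) := by
    intro j hj hjS
    rcases Nat.lt_or_ge (rd G S (c (j + 1))) 2 with h | h
    · have h1 : rd G S (c (j + 1)) = 1 :=
        le_antisymm (Nat.lt_succ_iff.mp h) (hrd1 j hj)
      have := F.dom (c (j + 1)) (hnS j hj) h1
      rw [hfc j hj] at this
      exact absurd this hjS
    · exact h
  have hrdmono : ∀ j, j < i → rd G S (c j) < rd G S (c (j + 1)) := by
    intro j hj
    by_cases hjS : c j ∈ S
    · have h0 : rd G S (c j) ≤ 0 := rd_le_of_mem G S (k := 0) hjS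
      have h1 := hrd1 j hj
      omega
    · have h2 := hrd2 j hj hjS
      have hzf := F.zf (c (j + 1)) (hnS j hj) h2
      rw [hfc j hj] at hzf
      exact hzf.1
  have part1 : ∀ j, j < i → ℓ (c j) < ℓ (c (j + 1)) := by
    intro j
    induction j with
    | zero => exact fun _ => hlt
    | succ m ih =>
      intro hj
      have hm : m < i := by omega
      have ihm : ℓ (c m) < ℓ (c (m + 1)) := ih hm
      have hbS : c (m + 1) ∉ S := hnS m hm
      have h2 : 2 ≤ rd G S (c (m + 2)) := hrd2 (m + 1) hj hbS
      rcases lt_trichotomy (ℓ (c (m + 1))) (ℓ (c (m + 2))) with h | h | h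
      · exact h
      · exact absurd (hinj h) (G.ne_of_adj (hadj (m + 1) hj))
      · exfalso
        have hab : |ℓ (c m) - ℓ (c (m + 1))| ≤ 1 := ((hrep _ _).mp (hadj m hm)).2
        have hbd : |ℓ (c (m + 1)) - ℓ (c (m + 2))| ≤ 1 := ((hrep _ _).mp (hadj (m + 1) hj)).2
        rw [abs_le] at hab hbd
        by_cases had : c m = c (m + 2)
        · have h1 := hrdmono m hm
          have h2' : rd G S (c (m + 1)) < rd G S (c (m + 2)) := hrdmono (m + 1) hj
          rw [← had] at h2'
          omega
        · have hdist : |ℓ (c m) - ℓ (c (m + 2))| < 1 := by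
            rw [abs_lt]
            constructor <;> linarith
          have hadjad : G.Adj (c m) (c (m + 2)) := (hrep _ _).mpr ⟨had, hdist.le⟩
          by_cases hmS : c m ∈ S
          · have hmem : c (m + 2) ∈ obs G S 1 :=
              Set.mem_union_right _ ⟨c m, hmS, hadjad⟩
            have := rd_le_of_mem G S hmem
            omega
          · have h2b := hrd2 m hm hmS
            have hzf := F.zf (c (m + 1)) hbS h2b
            rw [hfc m hm] at hzf
            have hne2 : c (m + 2) ≠ c (m + 1) := (G.ne_of_adj (hadj (m + 1) hj)).symm
            have hlt2 := hzf.2 (c (m + 2)) hadjad hne2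
            have hmm : rd G S (c (m + 1)) < rd G S (c (m + 2)) := hrdmono (m + 1) hj
            omega
  refine ⟨fun j _ hji => part1 j hji, fun h2i u hu0 hui => ?_⟩
  have hi1 : i - 1 + 1 = i := by omega
  have hi2 : i - 2 + 1 = i - 1 := by omega
  have hiS : c (i - 1) ∉ S := by
    have := hnS (i - 2) (by omega)
    rwa [hi2] at this
  have hrdci : 2 ≤ rd G S (c i) := by
    have := hrd2 (i - 1) (by omega) hiS
    rwa [hi1] at this
  have hrdle : ∀ k, k ≤ i → ∀ j, j ≤ k → rd G S (c j) ≤ rd G S (c k) := by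
    intro k
    induction k with
    | zero =>
      intro _ j hj
      have : j = 0 := by omega
      rw [this]
    | succ n ihn =>
      intro hk j hj
      rcases Nat.lt_or_ge j (n + 1) with h | h
      · exact le_trans (ihn (by omega) j (by omega)) (le_of_lt (hrdmono n (by omega)))
      · have : j = n + 1 := by omega
        rw [this]
  have hPex : ∃ j, ℓ u < ℓ (c (j + 1)) := ⟨i - 1, by rw [hi1]; exact hui⟩
  set j0 := Nat.find hPex with hj0def
  have hj0P : ℓ u < ℓ (c (j0 + 1)) := Nat.find_spec hPex
  have hj0i : j0 < i := by
    by_contra h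
    push_neg at h
    have hmin := Nat.find_min hPex (m := i - 1) (by omega)
    rw [hi1] at hmin
    exact hmin hui
  have hj0lb : ℓ (c j0) ≤ ℓ u := by
    rcases Nat.eq_zero_or_pos j0 with h | h
    · rw [h]; exact hu0
    · have hm := Nat.find_min hPex (m := j0 - 1) (by omega)
      have he : j0 - 1 + 1 = j0 := by omega
      rw [he] at hm
      exact le_of_not_gt hm
  by_cases huj : u = c j0
  · have h1 : rd G S (c j0) < rd G S (c (j0 + 1)) := hrdmono j0 hj0i
    have h2 : rd G S (c (j0 + 1)) ≤ rd G S (c i) := hrdle i le_rfl (j0 + 1) (by omega)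
    rw [huj]
    omega
  · have hbd : |ℓ (c j0) - ℓ (c (j0 + 1))| ≤ 1 := ((hrep _ _).mp (hadj j0 hj0i)).2
    rw [abs_le] at hbd
    have hadjx : G.Adj (c j0) u := by
      refine (hrep _ _).mpr ⟨fun h => huj h.symm, ?_⟩
      rw [abs_le]
      constructor <;> linarith
    rcases Nat.lt_or_ge (rd G S (c (j0 + 1))) 2 with h2 | h2
    · have h1 : rd G S (c (j0 + 1)) = 1 :=
        le_antisymm (Nat.lt_succ_iff.mp h2) (hrd1 j0 hj0i)
      have hS0 : c j0 ∈ S := by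
        have := F.dom (c (j0 + 1)) (hnS j0 hj0i) h1
        rwa [hfc j0 hj0i] at this
      have hmem : u ∈ obs G S 1 := Set.mem_union_right _ ⟨c j0, hS0, hadjx⟩
      have := rd_le_of_mem G S hmem
      omega
    · have hne : u ≠ c (j0 + 1) := fun h => absurd (h ▸ hj0P) (lt_irrefl _)
      have hzf := F.zf (c (j0 + 1)) (hnS j0 hj0i) h2
      rw [hfc j0 hj0i] at hzf
      have h1 := hzf.2 u hadjx hne
      have h3 := hrdle i le_rfl (j0 + 1) (by omega)
      omega
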